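/- Let V be an r-dimensional space of polynomials with discrete exponents at z given by c_r < c_{r−1}+1 < … < c_1 + r − 1 (so the i-th smallest exponent is c_{r+1−i} + i − 1), and set 𝒯_i(x) = (x−z+h)(x−z+2h)⋯(x−z+c_i h). Then for any f₁,…,f_i ∈ V, the discrete Wronskian Wr(f₁,…,f_i)(x) = det(f_j(x−(k−1)h))_{k,j=1}^i is divisible in C[x] by ∏_{j=1}^i 𝒯_{r+1−j}(x−(i−j)h). -/

import Mathlib

open Polynomial

noncomputable def discWr (h : ℂ) {r : ℕ} (g : Fin r → Polynomial ℂ) : Polynomial ℂ :=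
  Matrix.det (Matrix.of fun i j : Fin r =>
    (g j).comp (Polynomial.X - Polynomial.C (((i : ℕ) : ℂ) * h)))

section CombCount
open Finset in
lemma comb_count {r i : ℕ} (hi : i ≤ r) (e : Fin r → ℕ) (he : Monotone e)
    (t : ℤ) (τ : Fin i → Fin r) (hτ : Function.Injective τ) :
    (Finset.univ.filter fun j : Fin i =>
        0 ≤ t + i - 2 - (j : ℤ) ∧ t + i - 1 ≤ (e (Fin.castLE hi j) : ℤ)).card ≤
    (Finset.univ.filter fun m : Fin i =>
        1 ≤ t + (m : ℤ) ∧ t + (m : ℤ) ≤ (e (τ m) : ℤ)).card := by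
  classical
  set Nset := (Finset.univ.filter fun j : Fin i =>
      0 ≤ t + i - 2 - (j : ℤ) ∧ t + i - 1 ≤ (e (Fin.castLE hi j) : ℤ)) with hNset
  rcases Nset.eq_empty_or_nonempty with hN | hN
  · simp [hN]
  set j0 := Nset.min' hN with hj0
  have hj0mem : j0 ∈ Nset := Nset.min'_mem hN
  rw [hNset, Finset.mem_filter] at hj0mem
  obtain ⟨-, hj01, hj02⟩ := hj0mem
  set B2 := (Finset.univ.filter fun m : Fin i => t + i - 1 ≤ (e (τ m) : ℤ)) with hB2
  set Bc := (Finset.univ.filter fun m : Fin i => (m : ℤ) ≤ -t) with hBc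
  -- B2 complement has card ≤ j0
  have hB2c : (Finset.univ.filter fun m : Fin i => ¬ (t + i - 1 ≤ (e (τ m) : ℤ))).card ≤ (j0 : ℕ) := by
    have hle : (Finset.univ.filter fun m : Fin i => ¬ (t + i - 1 ≤ (e (τ m) : ℤ))).card ≤ (Finset.range (j0:ℕ)).card := by
      apply Finset.card_le_card_of_injOn
      case f => exact fun m => ((τ m : ℕ))
      · intro m hm
        rw [Finset.mem_coe, Finset.mem_filter] at hm
        rw [Finset.mem_coe, Finset.mem_range]
        by_contra hcon
        push_neg at hcon
        have hle2 : Fin.castLE hi j0 ≤ τ m := by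
          rw [Fin.le_def]; simpa using hcon
        have := he hle2
        have := hm.2
        omega
      · intro a _ b _ hab
        exact hτ (Fin.val_injective hab)
    simpa using hle
  have hsplit : B2.card + (Finset.univ.filter fun m : Fin i => ¬ (t + i - 1 ≤ (e (τ m) : ℤ))).card = i := by
    rw [hB2, Finset.card_filter_add_card_filter_not]
    simp
  -- Bc card bound
  have hBcard : Bc.card ≤ (1 - t).toNat := by
    have : Bc.card ≤ (Finset.Icc (0:ℤ) (-t)).card := by
      apply Finset.card_le_card_of_injOn
      case f => exact fun m => ((m:ℕ) : ℤ)
      · intro m hm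
        rw [hBc, Finset.mem_coe, Finset.mem_filter] at hm
        rw [Finset.mem_coe, Finset.mem_Icc]
        constructor
        · positivity
        · exact hm.2
      · intro a _ b _ hab
        have hab' : ((a:ℕ):ℤ) = ((b:ℕ):ℤ) := hab
        exact Fin.val_injective (Nat.cast_injective hab')
    rwa [Int.card_Icc, show -t + 1 - 0 = 1 - t by ring] at this
  -- Nset card bounds
  have hNb1 : Nset.card ≤ (t + i - 2 - j0 + 1).toNat := by
    have : Nset.card ≤ (Finset.Icc (j0 : ℤ) (t + i - 2)).card := by
      apply Finset.card_le_card_of_injOn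
      case f => exact fun j => ((j:ℕ) : ℤ)
      · intro j hj
        have hmin : j0 ≤ j := Finset.min'_le _ _ hj
        rw [hNset, Finset.mem_coe, Finset.mem_filter] at hj
        rw [Finset.mem_coe, Finset.mem_Icc]
        beta_reduce
        refine ⟨?_, by omega⟩
        exact_mod_cast (Fin.le_def.mp hmin)
      · intro a _ b _ hab
        have hab' : ((a:ℕ):ℤ) = ((b:ℕ):ℤ) := hab
        exact Fin.val_injective (Nat.cast_injective hab')
    rwa [Int.card_Icc, show t + i - 2 + 1 - j0 = t + i - 2 - j0 + 1 by ring] at this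
  have hNb2 : Nset.card ≤ ((i:ℤ) - 1 - j0 + 1).toNat := by
    have : Nset.card ≤ (Finset.Icc (j0 : ℤ) ((i:ℤ) - 1)).card := by
      apply Finset.card_le_card_of_injOn
      case f => exact fun j => ((j:ℕ) : ℤ)
      · intro j hj
        have hmin : j0 ≤ j := Finset.min'_le _ _ hj
        rw [Finset.mem_coe, Finset.mem_Icc]
        beta_reduce
        have := j.isLt
        refine ⟨by exact_mod_cast (Fin.le_def.mp hmin), by omega⟩
      · intro a _ b _ hab
        have hab' : ((a:ℕ):ℤ) = ((b:ℕ):ℤ) := hab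
        exact Fin.val_injective (Nat.cast_injective hab')
    rwa [Int.card_Icc, show (i:ℤ) - 1 + 1 - j0 = (i:ℤ) - 1 - j0 + 1 by ring] at this
  -- combine
  have hj0i : (j0 : ℕ) < i := j0.isLt
  have hmain : Nset.card + Bc.card ≤ B2.card := by omega
  -- B2 \ Bc is inside the goal set
  have hsub : B2 \ Bc ⊆ (Finset.univ.filter fun m : Fin i =>
      1 ≤ t + (m : ℤ) ∧ t + (m : ℤ) ≤ (e (τ m) : ℤ)) := by
    intro m hm
    rw [Finset.mem_sdiff, hB2, hBc, Finset.mem_filter, Finset.mem_filter] at hm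
    obtain ⟨⟨-, h1⟩, h2⟩ := hm
    rw [Finset.mem_filter]
    have hm2 : ¬ ((m:ℤ) ≤ -t) := by
      intro hcon; exact h2 ⟨Finset.mem_univ m, hcon⟩
    have := m.isLt
    refine ⟨Finset.mem_univ m, by omega, by omega⟩
  have hcard : B2.card - Bc.card ≤ (B2 \ Bc).card := Finset.le_card_sdiff _ _
  have := Finset.card_le_card hsub
  omega
end CombCount

-- rewrite of a single linear factor
lemma factor_eq (z h : ℂ) (i : ℕ) (j : Fin i) (l : ℕ) :
    (Polynomial.X - Polynomial.C z + Polynomial.C (((l : ℂ) + 1) * h)).comp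
        (Polynomial.X - Polynomial.C (((i - 1 - (j : ℕ) : ℕ) : ℂ) * h))
      = Polynomial.X - Polynomial.C (z - ((((l:ℤ) + (j:ℕ) + 2 - i : ℤ) : ℂ)) * h) := by
  have hj := j.isLt
  have hcast : ((i - 1 - (j : ℕ) : ℕ) : ℂ) = (i : ℂ) - 1 - (j : ℕ) := by
    have hnat : (i - 1 - (j : ℕ)) + ((j : ℕ) + 1) = i := by omega
    have hc2 := congrArg (fun n : ℕ => (n : ℂ)) hnat
    push_cast at hc2
    linear_combination hc2
  rw [add_comp, sub_comp, X_comp, C_comp, C_comp, hcast]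
  have h2 : z - ((((l:ℤ) + (j:ℕ) + 2 - i : ℤ) : ℂ)) * h
      = ((i : ℂ) - 1 - (j : ℕ)) * h + z - ((l : ℂ) + 1) * h := by
    push_cast
    ring
  rw [h2, show Polynomial.C (((i : ℂ) - 1 - (j:ℕ)) * h + z - ((l : ℂ) + 1) * h)
      = Polynomial.C (((i : ℂ) - 1 - (j:ℕ)) * h) + Polynomial.C z - Polynomial.C (((l : ℂ) + 1) * h) from by
    rw [← C_add, ← C_sub]]
  ring

theorem wronskian_divisibility (h : ℂ) (hh : h ≠ 0) (z : ℂ) (r : ℕ)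
    (V : Submodule ℂ (Polynomial ℂ)) (c : Fin r → ℕ) (hc : Antitone c)
    (hexp : ∃ v : Fin r → Polynomial ℂ,
        Submodule.span ℂ (Set.range v) = V ∧ LinearIndependent ℂ v ∧
        ∀ i : Fin r,
          (∀ j : ℕ, 1 ≤ j → j ≤ c (Fin.rev i) + (i : ℕ) →
            (v i).eval (z - (j : ℂ) * h) = 0) ∧
          (v i).eval (z - (((c (Fin.rev i) + (i : ℕ) : ℕ) : ℂ) + 1) * h) ≠ 0)
    (i : ℕ) (hi : i ≤ r) (f : Fin i → Polynomial ℂ) (hf : ∀ j, f j ∈ V) :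
    (∏ j : Fin i,
        (∏ l ∈ Finset.range (c ⟨r - 1 - (j : ℕ), by omega⟩),
          (Polynomial.X - Polynomial.C z + Polynomial.C (((l : ℂ) + 1) * h))).comp
            (Polynomial.X - Polynomial.C (((i - 1 - (j : ℕ) : ℕ) : ℂ) * h)))
      ∣ discWr h f := by
  classical
  obtain ⟨v, hspan, -, hv⟩ := hexp
  set e : Fin r → ℕ := fun k => c k.rev + (k : ℕ) with he_def
  have he_mono : Monotone e := by
    intro k k' hk
    have h1 : k'.rev ≤ k.rev := Fin.rev_le_rev.mpr hk
    have h2 := hc h1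
    have h3 : (k : ℕ) ≤ (k' : ℕ) := hk
    simp only [he_def]
    omega
  have hvan : ∀ (k : Fin r) (n : ℕ), 1 ≤ n → n ≤ e k →
      (v k).eval (z - (n : ℂ) * h) = 0 := fun k n h1 h2 => (hv k).1 n h1 h2
  set cc : Fin i → ℕ := fun j => c ((Fin.castLE hi j).rev) with hcc
  have he_cast : ∀ j : Fin i, e (Fin.castLE hi j) = cc j + (j : ℕ) := fun j => rfl
  set F : ℤ → Polynomial ℂ := fun t => Polynomial.X - Polynomial.C (z - (t : ℂ) * h) with hF
  set g : (Σ _ : Fin i, ℕ) → ℤ := fun p => (p.2 : ℤ) + (p.1 : ℕ) + 2 - i with hg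
  set S : Finset (Σ _ : Fin i, ℕ) :=
    Finset.univ.sigma (fun j => Finset.range (cc j)) with hS
  set T := S.image g with hT
  set N : ℤ → ℕ := fun y => (S.filter (fun p => g p = y)).card with hN
  -- Step 1 : the product equals a grouped product of linear factors
  have hstep1 : (∏ j : Fin i,
        (∏ l ∈ Finset.range (c ⟨r - 1 - (j : ℕ), by omega⟩),
          (Polynomial.X - Polynomial.C z + Polynomial.C (((l : ℂ) + 1) * h))).comp
            (Polynomial.X - Polynomial.C (((i - 1 - (j : ℕ) : ℕ) : ℂ) * h)))
      = ∏ y ∈ T, F y ^ N y := by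
    have h1 : (∏ j : Fin i,
        (∏ l ∈ Finset.range (c ⟨r - 1 - (j : ℕ), by omega⟩),
          (Polynomial.X - Polynomial.C z + Polynomial.C (((l : ℂ) + 1) * h))).comp
            (Polynomial.X - Polynomial.C (((i - 1 - (j : ℕ) : ℕ) : ℂ) * h)))
        = ∏ p ∈ S, F (g p) := by
      rw [hS, Finset.prod_sigma]
      apply Finset.prod_congr rfl
      intro j _
      have hidx : (⟨r - 1 - (j : ℕ), by omega⟩ : Fin r) = (Fin.castLE hi j).rev := by
        apply Fin.ext
        simp only [Fin.val_rev, Fin.coe_castLE]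
        omega
      rw [hidx, Polynomial.prod_comp]
      apply Finset.prod_congr rfl
      intro l _
      exact factor_eq z h i j l
    rw [h1, ← Finset.prod_fiberwise_of_maps_to (fun p hp => Finset.mem_image_of_mem g hp)
      (fun p => F (g p))]
    apply Finset.prod_congr rfl
    intro y _
    have : ∀ p ∈ S.filter (fun p => g p = y), F (g p) = F y := by
      intro p hp
      rw [(Finset.mem_filter.mp hp).2]
    rw [Finset.prod_congr rfl this, Finset.prod_const]
  rw [hstep1]
  -- Step 2 : the factors for distinct y are coprime
  apply Finset.prod_dvd_of_coprime
  · intro y hy y' hy' hne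
    apply IsCoprime.pow
    apply Polynomial.isCoprime_X_sub_C_of_isUnit_sub
    apply IsUnit.mk0
    have : (y : ℂ) ≠ (y' : ℂ) := by
      simp only [ne_eq, Int.cast_inj]
      exact hne
    intro hcon
    apply this
    have : ((y' : ℂ) - (y : ℂ)) * h = 0 := by linear_combination hcon
    rcases mul_eq_zero.mp this with h1 | h2
    · linear_combination -h1
    · exact absurd h2 hh
  -- Step 3 : each power divides the Wronskian
  intro y _
  -- replace the fiber count by the count over Fin i
  have hNle : N y ≤ (Finset.univ.filter fun j : Fin i =>
      0 ≤ y + i - 2 - (j : ℤ) ∧ y + i - 1 ≤ (e (Fin.castLE hi j) : ℤ)).card := by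
    have hfib : S.filter (fun p => g p = y)
        = Finset.univ.sigma (fun j : Fin i => (Finset.range (cc j)).filter
            (fun l : ℕ => (l : ℤ) + (j : ℕ) + 2 - i = y)) := by
      ext ⟨j, l⟩
      simp only [hS, hg, Finset.mem_filter, Finset.mem_sigma, Finset.mem_univ, true_and]
    rw [hN]
    simp only []
    rw [hfib, Finset.card_sigma, Finset.card_filter]
    apply Finset.sum_le_sum
    intro j _
    have h3 : (e (Fin.castLE hi j) : ℤ) = (cc j : ℤ) + (j : ℕ) := by
      rw [he_cast j]; push_cast; ring
    by_cases hcond : (0 ≤ y + (i:ℤ) - 2 - (j : ℤ) ∧ y + (i:ℤ) - 1 ≤ (e (Fin.castLE hi j) : ℤ))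
    · rw [if_pos hcond]
      apply Finset.card_le_one.mpr
      intro a ha' b hb'
      rw [Finset.mem_filter] at ha' hb'
      have h1 := ha'.2
      have h2 := hb'.2
      omega
    · rw [if_neg hcond]
      simp only [Nat.le_zero, Finset.card_eq_zero]
      apply Finset.eq_empty_of_forall_notMem
      intro l hl
      rw [Finset.mem_filter, Finset.mem_range] at hl
      exact hcond (by omega)
  apply dvd_trans (pow_dvd_pow (F y) hNle)
  -- expand f in the basis
  have hmem : ∀ j, f j ∈ Submodule.span ℂ (Set.range v) := by
    intro j; rw [hspan]; exact hf j
  choose a ha using fun j => (Submodule.mem_span_range_iff_exists_fun ℂ).mp (hmem j)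
  have hflip : ∀ u : Fin i → Polynomial ℂ, discWr h u
      = Matrix.det (Matrix.of fun j m : Fin i =>
          (u j).comp (Polynomial.X - Polynomial.C (((m : ℕ) : ℂ) * h))) := by
    intro u
    unfold discWr
    rw [← Matrix.det_transpose]
    congr 1
  have hexpand : discWr h f
      = ∑ κ : Fin i → Fin r, (∏ j, a j (κ j)) • discWr h (fun j => v (κ j)) := by
    rw [hflip f]
    have h1 : (Matrix.of fun j m : Fin i =>
          (f j).comp (Polynomial.X - Polynomial.C (((m : ℕ) : ℂ) * h)))
        = fun j : Fin i => ∑ k : Fin r,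
            (fun m : Fin i => Polynomial.C (a j k) • (v k).comp
              (Polynomial.X - Polynomial.C (((m : ℕ) : ℂ) * h))) := by
      funext j m
      simp only [Matrix.of_apply, Finset.sum_apply]
      rw [← ha j, Polynomial.sum_comp]
      apply Finset.sum_congr rfl
      intro k _
      simp [Polynomial.smul_comp, Polynomial.smul_eq_C_mul, smul_eq_mul]
    rw [h1]
    rw [show Matrix.det (n := Fin i) (R := Polynomial ℂ)
        = fun M => Matrix.detRowAlternating M from rfl]
    simp only []
    have hms : Matrix.detRowAlternating (R := Polynomial ℂ) (n := Fin i)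
        (fun j : Fin i => ∑ k : Fin r, (fun m : Fin i => Polynomial.C (a j k) • (v k).comp
          (Polynomial.X - Polynomial.C (((m : ℕ) : ℂ) * h))))
      = ∑ κ : Fin i → Fin r, Matrix.detRowAlternating (R := Polynomial ℂ) (n := Fin i)
          (fun j : Fin i => (fun m : Fin i => Polynomial.C (a j (κ j)) • (v (κ j)).comp
            (Polynomial.X - Polynomial.C (((m : ℕ) : ℂ) * h)))) :=
      (Matrix.detRowAlternating (R := Polynomial ℂ) (n := Fin i)).toMultilinearMap.map_sum
        (fun j k => (fun m : Fin i => Polynomial.C (a j k) • (v k).comp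
          (Polynomial.X - Polynomial.C (((m : ℕ) : ℂ) * h))))
    rw [hms]
    apply Finset.sum_congr rfl
    intro κ _
    have hsm : Matrix.detRowAlternating (R := Polynomial ℂ) (n := Fin i)
        (fun j : Fin i => (fun m : Fin i => Polynomial.C (a j (κ j)) • (v (κ j)).comp
          (Polynomial.X - Polynomial.C (((m : ℕ) : ℂ) * h))))
      = (∏ j : Fin i, Polynomial.C (a j (κ j))) • Matrix.detRowAlternating (R := Polynomial ℂ) (n := Fin i)
          (fun j : Fin i => (fun m : Fin i => (v (κ j)).comp
            (Polynomial.X - Polynomial.C (((m : ℕ) : ℂ) * h)))) :=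
      (Matrix.detRowAlternating (R := Polynomial ℂ) (n := Fin i)).toMultilinearMap.map_smul_univ
        (fun j => Polynomial.C (a j (κ j)))
        (fun j => (fun m : Fin i => (v (κ j)).comp
          (Polynomial.X - Polynomial.C (((m : ℕ) : ℂ) * h))))
    rw [hsm, ← map_prod Polynomial.C (fun j => a j (κ j)) Finset.univ]
    rw [smul_eq_mul, ← Polynomial.smul_eq_C_mul]
    congr 1
    rw [hflip (fun j => v (κ j))]
    rfl
  rw [hexpand]
  apply Finset.dvd_sum
  intro κ _
  rw [smul_eq_C_mul]
  apply Dvd.dvd.mul_left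
  by_cases hκ : Function.Injective κ
  · rw [hflip (fun j => v (κ j)), Matrix.det_apply]
    apply Finset.dvd_sum
    intro σ _
    have hτ : Function.Injective (fun m : Fin i => κ (σ m)) := by
      intro a b hab
      exact σ.injective (hκ hab)
    have hcount := comb_count hi e he_mono y (fun m => κ (σ m)) hτ
    have hdvd : F y ^ (Finset.univ.filter fun m : Fin i =>
          1 ≤ y + (m : ℤ) ∧ y + (m : ℤ) ≤ (e (κ (σ m)) : ℤ)).card
        ∣ ∏ m : Fin i, (Matrix.of fun j m' : Fin i =>
            ((v (κ j)).comp (Polynomial.X - Polynomial.C (((m' : ℕ) : ℂ) * h)))) (σ m) m := by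
      rw [Finset.card_filter, ← Finset.prod_pow_eq_pow_sum]
      apply Finset.prod_dvd_prod_of_dvd
      intro m _
      simp only [Matrix.of_apply]
      by_cases hcond : (1 ≤ y + (m : ℤ) ∧ y + (m : ℤ) ≤ (e (κ (σ m)) : ℤ))
      · rw [if_pos hcond]
        rw [pow_one, hF]
        apply (Polynomial.dvd_iff_isRoot).mpr
        rw [Polynomial.IsRoot, Polynomial.eval_comp]
        simp only [Polynomial.eval_sub, Polynomial.eval_X, Polynomial.eval_C]
        have harg : z - (y : ℂ) * h - ((m : ℕ) : ℂ) * h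
            = z - ((((y + (m : ℕ)).toNat : ℕ) : ℂ)) * h := by
          have h4 : (((y + (m : ℕ)).toNat : ℤ)) = y + (m : ℕ) :=
            Int.toNat_of_nonneg (by omega)
          have h5 := congrArg (fun n : ℤ => (n : ℂ)) h4
          push_cast at h5
          rw [h5]; ring
        rw [harg]
        exact hvan (κ (σ m)) ((y + (m : ℕ)).toNat) (by omega) (by omega)
      · rw [if_neg hcond, pow_zero]
        exact one_dvd _
    have hle2 := pow_dvd_pow (F y) hcount
    have := dvd_trans hle2 hdvd
    rcases Int.units_eq_one_or (Equiv.Perm.sign σ) with hs | hs <;> rw [hs]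
    · rw [one_smul]
      exact this
    · rw [Units.neg_smul, one_smul]
      exact (dvd_neg).mpr this
  · -- two equal columns give a zero determinant
    rw [Function.not_injective_iff] at hκ
    obtain ⟨j, j', hjj', hne⟩ := hκ
    have : discWr h (fun m => v (κ m)) = 0 := by
      apply Matrix.det_zero_of_column_eq hne
      intro k
      simp [hjj']
    rw [this]
    exact dvd_zero _
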